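/- Let n ∈ ℕ and let τ = (τ_1,…,τ_n) ∈ ℝ_+^n satisfy min{τ_1,…,τ_n} > 0 and τ_1 + ⋯ + τ_n = 1. Let Ψ = (ψ_1,…,ψ_n) be an n-tuple of positive, monotonically decreasing functions ψ_i : ℕ → ℝ_+ such that for every sufficiently large N ∈ ℕ, ψ_j(N) ≤ ((log log N)/(2N))^{τ_j/2} for all 1 ≤ j ≤ n. Then for almost every sequence ω in [0,1]^n the following holds: if there is some M > 1 such that Σ_{j=1}^∞ (M^{3^j/2}/√j) · ∏_{i=1}^n ψ_i(M^{3^j}) = ∞, then λ_n(W_ω(Ψ)) = 1. -/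

import Mathlib

open MeasureTheory Filter Set Metric
open scoped ENNReal NNReal

noncomputable section

/-- The unit cube `[0,1]^n`. -/
def cube (n : ℕ) : Set (Fin n → ℝ) := Set.univ.pi fun _ => Set.Icc (0 : ℝ) 1

/-- `W_ω(Ψ)`: points of `[0,1]^n` that are coordinate-wise `ψᵢ`-approximable by the
sequence `ω` for infinitely many indices `j`. -/
def WSet (n : ℕ) (ω : ℕ → Fin n → ℝ) (Ψ : Fin n → ℕ → ℝ) : Set (Fin n → ℝ) :=
  {x | x ∈ cube n ∧ ∃ᶠ j in Filter.atTop, ∀ i, |x i - ω j i| < Ψ i j}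

/-- Rectangles `∏ [aᵢ, bᵢ) ⊆ [0,1]^n` with `aᵢ < bᵢ`. -/
def IsRect (n : ℕ) (R : Set (Fin n → ℝ)) : Prop :=
  ∃ a b : Fin n → ℝ, (∀ i, 0 ≤ a i ∧ a i < b i ∧ b i ≤ 1) ∧
    R = Set.univ.pi fun i => Set.Ico (a i) (b i)

open Classical in
/-- `A(R; N, ω)`: the number of indices `1 ≤ j ≤ N` with `ω j ∈ R`. -/
def countIn {n : ℕ} (ω : ℕ → Fin n → ℝ) (R : Set (Fin n → ℝ)) (N : ℕ) : ℕ :=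
  ((Finset.Icc 1 N).filter fun j => ω j ∈ R).card

/-- The discrepancy `D_N(ω)` of the sequence `ω`. -/
def Disc (n : ℕ) (ω : ℕ → Fin n → ℝ) (N : ℕ) : ℝ :=
  sSup {d | ∃ R, IsRect n R ∧ d = |(countIn ω R N : ℝ) / N - (volume R).toReal|}

/-- `ω` is an `(𝒩, v)`-discrepancy satisfying sequence. -/
def IsDSS (n : ℕ) (ω : ℕ → Fin n → ℝ) (Nseq : ℕ → ℕ) (v : ℕ → ℝ) : Prop :=
  StrictMono Nseq ∧ (∀ k, 0 < Nseq k) ∧ (∀ N, 0 < v N) ∧ Antitone v ∧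
    Filter.Tendsto v Filter.atTop (nhds 0) ∧
    (∀ k, Disc n ω (Nseq k) < v (Nseq k)) ∧
    Filter.limsup (fun k => (Nseq k : ℝ) * v (Nseq (k + 1))) Filter.atTop < 1

/-- `f` is `c`-regular with respect to the sequence `Nseq`. -/
def CRegular (f : ℕ → ℝ) (Nseq : ℕ → ℕ) (c : ℝ) : Prop :=
  ∀ᶠ k in Filter.atTop, f (Nseq (k + 1)) ≤ c * f (Nseq k)

/-- `Δ(x, r)`: product of the intervals of radius `rᵢ` about `xᵢ`, intersected with `[0,1]`. -/
def Delta (n : ℕ) (x r : Fin n → ℝ) : Set (Fin n → ℝ) :=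
  Set.univ.pi fun i => Metric.ball (x i) (r i) ∩ Set.Icc 0 1


/-- `μ` is the infinite product on `([0,1]^n)^ℕ` of the Lebesgue (uniform) probability
measure on the unit cube: a probability measure whose finite-dimensional marginals are
products of the Lebesgue measure restricted to the cube. -/
def IsUniformProduct (n : ℕ) (μ : Measure (ℕ → Fin n → ℝ)) : Prop :=
  IsProbabilityMeasure μ ∧
    ∀ (s : Finset ℕ) (f : ℕ → Set (Fin n → ℝ)), (∀ j, MeasurableSet (f j)) →
      μ {ω | ∀ j ∈ s, ω j ∈ f j} = ∏ j ∈ s, volume (f j ∩ cube n)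


lemma aux_K_le (K : ℕ) : ∀ᶠ j in atTop, K * (j + 1) ≤ 3 ^ j := by
  have key : ∀ j, 2 * K ≤ j → K * 2 ^ j ≤ 3 ^ j := by
    intro j hj
    induction j, hj using Nat.le_induction with
    | base =>
      have h1 : K ≤ 2 ^ K := (Nat.lt_two_pow_self (n := K)).le
      calc K * 2 ^ (2 * K) ≤ 2 ^ K * 2 ^ (2 * K) := Nat.mul_le_mul_right _ h1
        _ = 2 ^ (3 * K) := by rw [← pow_add]; ring_nf
        _ = 8 ^ K := by rw [pow_mul]; norm_num
        _ ≤ 9 ^ K := Nat.pow_le_pow_left (by norm_num) K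
        _ = 3 ^ (2 * K) := by rw [pow_mul]; norm_num
    | succ j hj ih =>
      calc K * 2 ^ (j + 1) = K * 2 ^ j * 2 := by ring
        _ ≤ 3 ^ j * 2 := Nat.mul_le_mul_right _ ih
        _ ≤ 3 ^ j * 3 := Nat.mul_le_mul_left _ (by norm_num)
        _ = 3 ^ (j + 1) := by ring
  filter_upwards [eventually_ge_atTop (2 * K)] with j hj
  calc K * (j + 1) ≤ K * 2 ^ j := Nat.mul_le_mul_left _ (Nat.lt_two_pow_self (n := j))
    _ ≤ 3 ^ j := key j hj

lemma not_summable_of_sparse {M : ℝ} (hM : 1 < M) {P : ℕ → ℝ}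
    (hP0 : ∀ N, 0 ≤ P N) (hPa : Antitone P)
    (hdiv : ¬ Summable fun j : ℕ => Real.sqrt (M ^ 3 ^ j) / Real.sqrt j * P ⌊M ^ 3 ^ j⌋₊) :
    ¬ Summable P := by
  intro hS
  set g := fun j : ℕ => Real.sqrt (M ^ 3 ^ j) / Real.sqrt j * P ⌊M ^ 3 ^ j⌋₊ with hg
  have hg0 : ∀ j, 0 ≤ g j := fun j =>
    mul_nonneg (div_nonneg (Real.sqrt_nonneg _) (Real.sqrt_nonneg _)) (hP0 _)
  have hfreq : ∃ᶠ j in atTop, (1 / 2 : ℝ) ^ j ≤ g j := by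
    by_contra h
    rw [Filter.not_frequently] at h
    obtain ⟨N0, hN0⟩ := eventually_atTop.1 h
    apply hdiv
    rw [← summable_nat_add_iff N0]
    apply Summable.of_nonneg_of_le (fun j => hg0 _)
      (fun j => (not_le.1 (hN0 (j + N0) (Nat.le_add_left _ _))).le)
    apply ((summable_geometric_of_lt_one (by norm_num) (by norm_num)).comp_injective
      (add_left_injective N0))
  obtain ⟨K, hK⟩ := pow_unbounded_of_one_lt (16 : ℝ) hM
  set T := ∑' n, P n with hT
  have hev : ∀ᶠ j in atTop, K * (j + 1) ≤ 3 ^ j ∧ 1 ≤ j ∧ ⌈T⌉₊ ≤ j :=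
    (aux_K_le K).and ((eventually_ge_atTop 1).and (eventually_ge_atTop ⌈T⌉₊))
  obtain ⟨j, hgj, hj1, hj2, hj3⟩ := (hfreq.and_eventually hev).exists
  set c : ℕ := 3 ^ j with hc
  set X := Real.sqrt (M ^ c) with hX
  set Nj := ⌊M ^ c⌋₊ with hNj
  have hMc0 : (0:ℝ) < M ^ c := by positivity
  have h16 : (16 : ℝ) ^ (j + 1) ≤ M ^ c := by
    calc (16 : ℝ) ^ (j + 1) ≤ (M ^ K) ^ (j + 1) := pow_le_pow_left₀ (by norm_num) hK.le _
      _ = M ^ (K * (j + 1)) := by rw [← pow_mul]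
      _ ≤ M ^ c := pow_le_pow_right₀ hM.le hj1
  have hX4 : (4 : ℝ) ^ (j + 1) ≤ X := by
    have h2 : ((4 : ℝ) ^ (j + 1)) ^ 2 = 16 ^ (j + 1) := by
      rw [← pow_mul, mul_comm, pow_mul]; norm_num
    calc (4 : ℝ) ^ (j + 1) = Real.sqrt (((4 : ℝ) ^ (j + 1)) ^ 2) :=
          (Real.sqrt_sq (by positivity)).symm
      _ = Real.sqrt (16 ^ (j + 1)) := by rw [h2]
      _ ≤ X := Real.sqrt_le_sqrt h16
  have hXpos : 0 < X := Real.sqrt_pos.2 hMc0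
  have hXX : X * X = M ^ c := Real.mul_self_sqrt hMc0.le
  have hMc2 : (2 : ℝ) ≤ M ^ c := by
    have h16' : (16 : ℝ) ≤ 16 ^ (j + 1) := le_self_pow₀ (by norm_num) (Nat.succ_ne_zero j)
    linarith
  have hNjge : (M ^ c) / 2 ≤ (Nj : ℝ) := by
    have h := (Nat.sub_one_lt_floor (M ^ c)).le
    linarith
  have hsj : (1 : ℝ) ≤ Real.sqrt j := Real.one_le_sqrt.2 (by exact_mod_cast hj2)
  have hPNj : (1 / 2 : ℝ) ^ j / X ≤ P Nj := by
    have h1 : (1 / 2 : ℝ) ^ j ≤ X / Real.sqrt j * P Nj := hgj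
    have h2 : X / Real.sqrt j * P Nj ≤ X * P Nj :=
      mul_le_mul_of_nonneg_right (div_le_self hXpos.le hsj) (hP0 _)
    exact (div_le_iff₀ hXpos).2 (by rw [mul_comm]; exact h1.trans h2)
  have hsum_le : ∑ N ∈ Finset.Icc 1 Nj, P N ≤ T := Summable.sum_le_tsum _ (fun i _ => hP0 i) hS
  have hcard : (Finset.Icc 1 Nj).card = Nj := by rw [Nat.card_Icc]; omega
  have hlow : (Nj : ℝ) * P Nj ≤ ∑ N ∈ Finset.Icc 1 Nj, P N := by
    have h := Finset.card_nsmul_le_sum (Finset.Icc 1 Nj) P (P Nj)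
      (fun i hi => hPa (Finset.mem_Icc.1 hi).2)
    rwa [hcard, nsmul_eq_mul] at h
  have hchain : X / 2 ^ (j + 1) ≤ (Nj : ℝ) * P Nj := by
    have h1 : (M ^ c / 2) * ((1 / 2 : ℝ) ^ j / X) ≤ (Nj : ℝ) * P Nj :=
      mul_le_mul hNjge hPNj (by positivity) (Nat.cast_nonneg _)
    have h2 : X / 2 ^ (j + 1) = (M ^ c / 2) * ((1 / 2 : ℝ) ^ j / X) := by
      rw [← hXX]; field_simp; rw [pow_succ, mul_comm ((2:ℝ) ^ j) 2, mul_assoc, ← mul_pow]; norm_num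
    linarith
  have h4 : (2 : ℝ) ^ (j + 1) ≤ X / 2 ^ (j + 1) := by
    have h1 : (4 : ℝ) ^ (j + 1) / 2 ^ (j + 1) = 2 ^ (j + 1) := by
      rw [div_eq_iff (by positivity), ← mul_pow]; norm_num
    calc (2 : ℝ) ^ (j + 1) = 4 ^ (j + 1) / 2 ^ (j + 1) := h1.symm
      _ ≤ X / 2 ^ (j + 1) := by gcongr
  have h5 : ((j : ℝ)) + 1 ≤ 2 ^ (j + 1) := by
    have := (Nat.lt_two_pow_self (n := j + 1)).le
    exact_mod_cast this
  have h6 : T ≤ (j : ℝ) := (Nat.le_ceil T).trans (by exact_mod_cast hj3)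
  linarith

lemma ball_inter_Icc_vol {c r : ℝ} (hr : 0 < r) (hc : c ∈ Set.Icc (0:ℝ) 1) :
    ENNReal.ofReal (min r 1) ≤ volume (Metric.ball c r ∩ Set.Icc 0 1) := by
  obtain ⟨hc0, hc1⟩ := hc
  set m := min r 1 with hm
  have hm0 : 0 < m := lt_min hr one_pos
  have hm1 : m ≤ 1 := min_le_right _ _
  have hmr : m ≤ r := min_le_left _ _
  rcases le_or_gt (c + m) 1 with h | h
  · calc ENNReal.ofReal m = volume (Set.Ico c (c + m)) := by
          rw [Real.volume_Ico]; ring_nf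
      _ ≤ _ := by
          apply measure_mono
          rintro y ⟨hy1, hy2⟩
          refine ⟨?_, ?_, ?_⟩
          · rw [mem_ball, Real.dist_eq, abs_lt]; constructor <;> linarith
          · linarith
          · linarith
  · calc ENNReal.ofReal m = volume (Set.Ioc (1 - m) 1) := by
          rw [Real.volume_Ioc]; ring_nf
      _ ≤ _ := by
          apply measure_mono
          rintro y ⟨hy1, hy2⟩
          refine ⟨?_, ?_, ?_⟩
          · rw [mem_ball, Real.dist_eq, abs_lt]; constructor <;> linarith
          · linarith
          · linarith

lemma vol_pi_ball {n : ℕ} {x : Fin n → ℝ} (hx : x ∈ cube n) {r : Fin n → ℝ}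
    (hr : ∀ i, 0 < r i) :
    ENNReal.ofReal (∏ i, min (r i) 1) ≤
      volume ((Set.univ.pi fun i => Metric.ball (x i) (r i)) ∩ cube n) := by
  rw [cube, ← Set.pi_inter_distrib, volume_pi_pi,
    ENNReal.ofReal_prod_of_nonneg (fun i _ => (lt_min (hr i) one_pos).le)]
  exact Finset.prod_le_prod' fun i _ => ball_inter_Icc_vol (hr i) (hx i (Set.mem_univ i))

lemma ae_frequently {n : ℕ} (Ψ : Fin n → ℕ → ℝ) (hΨpos : ∀ i N, 0 < Ψ i N)
    (hQ : ¬ Summable fun N => ∏ i, min (Ψ i N) 1)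
    (μ : Measure (ℕ → Fin n → ℝ)) (hμ : IsUniformProduct n μ)
    (x : Fin n → ℝ) (hx : x ∈ cube n) :
    ∀ᵐ ω ∂μ, ∃ᶠ j in Filter.atTop, ∀ i, |x i - ω j i| < Ψ i j := by
  classical
  haveI : IsProbabilityMeasure μ := hμ.1
  set f : ℕ → Set (Fin n → ℝ) := fun j => Set.univ.pi fun i => Metric.ball (x i) (Ψ i j)
    with hf
  have hfm : ∀ j, MeasurableSet (f j) :=
    fun j => MeasurableSet.univ_pi fun i => measurableSet_ball
  set s : ℕ → Set (ℕ → Fin n → ℝ) := fun j => (fun ω => ω j) ⁻¹' f j with hs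
  have hsm : ∀ j, MeasurableSet (s j) := fun j => (measurable_pi_apply j) (hfm j)
  have key : ∀ t : Finset ℕ, μ (⋂ j ∈ t, s j) = ∏ j ∈ t, volume (f j ∩ cube n) := by
    intro t
    rw [show (⋂ j ∈ t, s j) = {ω | ∀ j ∈ t, ω j ∈ f j} by ext ω; simp [hs]]
    exact hμ.2 t f hfm
  have μs : ∀ j, μ (s j) = volume (f j ∩ cube n) := by
    intro j
    have := key {j}
    simpa using this
  have hindep : ProbabilityTheory.iIndepSet s μ := by
    refine (ProbabilityTheory.iIndepSet_iff_meas_biInter hsm).2 fun t => ?_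
    rw [key t]
    exact Finset.prod_congr rfl fun j _ => (μs j).symm
  have htsum : (∑' j, μ (s j)) = ∞ := by
    have hge : ∀ j, ENNReal.ofReal (∏ i, min (Ψ i j) 1) ≤ μ (s j) := fun j => by
      rw [μs j]; exact vol_pi_ball hx (fun i => hΨpos i j)
    have htop : (∑' j, ENNReal.ofReal (∏ i, min (Ψ i j) 1)) = ∞ := by
      by_contra h
      apply hQ
      have h' : (∑' j, ((∏ i, min (Ψ i j) 1).toNNReal : ℝ≥0∞)) ≠ ∞ := by
        simpa [ENNReal.ofReal] using h
      have h2 := NNReal.summable_coe.2 (ENNReal.tsum_coe_ne_top_iff_summable.1 h')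
      refine h2.congr fun N => ?_
      exact Real.coe_toNNReal _ (Finset.prod_nonneg fun i _ => (lt_min (hΨpos i N) one_pos).le)
    exact top_le_iff.1 (htop ▸ ENNReal.tsum_le_tsum hge)
  have hBC := ProbabilityTheory.measure_limsup_eq_one hsm hindep htsum
  have hset : limsup s atTop = {ω | ∃ᶠ j in atTop, ∀ i, |x i - ω j i| < Ψ i j} := by
    ext ω
    rw [Filter.mem_limsup_iff_frequently_mem]
    refine frequently_congr (Eventually.of_forall fun j => ?_)
    simp only [hs, hf, Set.mem_preimage, Set.mem_univ_pi, mem_ball, Real.dist_eq, mem_setOf_eq]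
    exact forall_congr' fun i => by rw [abs_sub_comm]
  rw [hset] at hBC
  have hmeas : MeasurableSet {ω : ℕ → Fin n → ℝ | ∃ᶠ j in atTop, ∀ i, |x i - ω j i| < Ψ i j} := by
    rw [← hset]
    exact MeasurableSet.measurableSet_limsup fun j => hsm j
  rw [Filter.eventually_iff, mem_ae_iff, ← prob_compl_eq_zero_iff hmeas] at *
  exact hBC

lemma cube_meas (n : ℕ) : MeasurableSet (cube n) :=
  MeasurableSet.univ_pi fun _ => measurableSet_Icc

lemma cube_vol (n : ℕ) : volume (cube n) = 1 := by
  rw [cube, volume_pi_pi]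
  simp [Real.volume_Icc]

theorem stmt_1 (n : ℕ) (τ : Fin n → ℝ) (hτpos : ∀ i, 0 < τ i) (hτsum : ∑ i, τ i = 1)
    (Ψ : Fin n → ℕ → ℝ) (hΨpos : ∀ i N, 0 < Ψ i N) (hΨanti : ∀ i, Antitone (Ψ i))
    (hineq : ∀ᶠ N in Filter.atTop, ∀ i,
      Ψ i N ≤ (Real.log (Real.log N) / (2 * N)) ^ (τ i / 2))
    (μ : Measure (ℕ → Fin n → ℝ)) (hμ : IsUniformProduct n μ) :
    ∀ᵐ ω ∂μ, (∃ M : ℝ, 1 < M ∧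
        ¬ Summable fun j : ℕ =>
          Real.sqrt (M ^ 3 ^ j) / Real.sqrt j * ∏ i, Ψ i ⌊M ^ 3 ^ j⌋₊) →
      volume (WSet n ω Ψ) = 1 := by
  classical
  haveI : IsProbabilityMeasure μ := hμ.1
  by_cases hdiv : ∃ M : ℝ, 1 < M ∧
      ¬ Summable fun j : ℕ =>
        Real.sqrt (M ^ 3 ^ j) / Real.sqrt j * ∏ i, Ψ i ⌊M ^ 3 ^ j⌋₊
  swap
  · filter_upwards with ω h; exact absurd h hdiv
  obtain ⟨M, hM, hMdiv⟩ := hdiv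
  set P : ℕ → ℝ := fun N => ∏ i, Ψ i N with hP
  have hP0 : ∀ N, 0 ≤ P N := fun N => Finset.prod_nonneg fun i _ => (hΨpos i N).le
  have hPa : Antitone P := fun a b hab =>
    Finset.prod_le_prod (fun i _ => (hΨpos i b).le) (fun i _ => hΨanti i hab)
  have hPdiv : ¬ Summable P := not_summable_of_sparse hM hP0 hPa hMdiv
  -- Ψ eventually ≤ 1
  have hsmall : ∀ᶠ N : ℕ in atTop, ∀ i, Ψ i N ≤ 1 := by
    have h1le : ∀ᶠ N : ℕ in atTop, ∀ i,
        (Real.log (Real.log N) / (2 * N)) ^ (τ i / 2) ≤ 1 := by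
      filter_upwards [eventually_ge_atTop 3] with N hN i
      have hN3 : (3 : ℝ) ≤ (N : ℝ) := by exact_mod_cast hN
      have hlog3 : (1 : ℝ) ≤ Real.log 3 := by
        rw [Real.le_log_iff_exp_le (by norm_num)]
        have := Real.exp_one_lt_d9
        linarith
      have hlogN : (1 : ℝ) ≤ Real.log N :=
        hlog3.trans (Real.log_le_log (by norm_num) hN3)
      have hll0 : 0 ≤ Real.log (Real.log N) := Real.log_nonneg hlogN
      apply Real.rpow_le_one
      · exact div_nonneg hll0 (by positivity)
      · rw [div_le_one (by positivity)]
        have h1 : Real.log (Real.log N) ≤ Real.log N := Real.log_le_self (by linarith)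
        have h2 : Real.log N ≤ (N : ℝ) := Real.log_le_self (by linarith)
        linarith
      · have := (hτpos i).le; linarith
    filter_upwards [hineq, h1le] with N h1 h2 i using (h1 i).trans (h2 i)
  have hQdiv : ¬ Summable (fun N => ∏ i, min (Ψ i N) 1) := by
    obtain ⟨N1, hN1⟩ := eventually_atTop.1 hsmall
    intro hQs
    apply hPdiv
    rw [← summable_nat_add_iff N1]
    rw [← summable_nat_add_iff N1] at hQs
    refine hQs.congr fun j => ?_
    exact Finset.prod_congr rfl fun i _ =>
      min_eq_left (hN1 (j + N1) (Nat.le_add_left _ _) i)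
  -- measurability of the pair set
  have hmeas : MeasurableSet {q : (Fin n → ℝ) × (ℕ → Fin n → ℝ) |
      ∃ᶠ j in atTop, ∀ i, |q.1 i - q.2 j i| < Ψ i j} := by
    have hup : {q : (Fin n → ℝ) × (ℕ → Fin n → ℝ) |
        ∃ᶠ j in atTop, ∀ i, |q.1 i - q.2 j i| < Ψ i j} =
        ⋂ N, ⋃ j, ⋃ (_ : N ≤ j), {q : (Fin n → ℝ) × (ℕ → Fin n → ℝ) |
          ∀ i, |q.1 i - q.2 j i| < Ψ i j} := by
      ext q
      simp [Filter.frequently_atTop, Set.mem_iInter, Set.mem_iUnion]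
    rw [hup]
    refine MeasurableSet.iInter fun N => MeasurableSet.iUnion fun j =>
      MeasurableSet.iUnion fun _ => ?_
    have heq : {q : (Fin n → ℝ) × (ℕ → Fin n → ℝ) | ∀ i, |q.1 i - q.2 j i| < Ψ i j} =
        ⋂ i, (fun q : (Fin n → ℝ) × (ℕ → Fin n → ℝ) => |q.1 i - q.2 j i|) ⁻¹'
          Set.Iio (Ψ i j) := by
      ext q; simp
    rw [heq]
    refine MeasurableSet.iInter fun i => ?_
    have hmf : Measurable fun q : (Fin n → ℝ) × (ℕ → Fin n → ℝ) => |q.1 i - q.2 j i| := by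
      apply Measurable.abs
      exact ((measurable_pi_apply i).comp measurable_fst).sub
        ((measurable_pi_apply i).comp ((measurable_pi_apply j).comp measurable_snd))
    exact hmf measurableSet_Iio
  -- Fubini swap
  have h1 : ∀ᵐ x ∂(volume.restrict (cube n)), ∀ᵐ ω ∂μ,
      ∃ᶠ j in atTop, ∀ i, |x i - ω j i| < Ψ i j := by
    filter_upwards [ae_restrict_mem (cube_meas n)] with x hx
    exact ae_frequently Ψ hΨpos hQdiv μ hμ x hx
  have h2 := (MeasureTheory.Measure.ae_ae_comm hmeas).1 h1
  filter_upwards [h2] with ω hω _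
  -- compute the volume
  have hnull : volume ({x : Fin n → ℝ |
      ¬ ∃ᶠ j in atTop, ∀ i, |x i - ω j i| < Ψ i j} ∩ cube n) = 0 := by
    have := ae_iff.1 hω
    rwa [Measure.restrict_apply' (cube_meas n)] at this
  have hsub : WSet n ω Ψ ⊆ cube n := fun x hx => hx.1
  have hcover : cube n ⊆ WSet n ω Ψ ∪
      ({x : Fin n → ℝ | ¬ ∃ᶠ j in atTop, ∀ i, |x i - ω j i| < Ψ i j} ∩ cube n) := by
    intro x hx
    by_cases hfreq : ∃ᶠ j in atTop, ∀ i, |x i - ω j i| < Ψ i j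
    · exact Or.inl ⟨hx, hfreq⟩
    · exact Or.inr ⟨hfreq, hx⟩
  refine le_antisymm ?_ ?_
  · calc volume (WSet n ω Ψ) ≤ volume (cube n) := measure_mono hsub
      _ = 1 := cube_vol n
  · calc (1 : ℝ≥0∞) = volume (cube n) := (cube_vol n).symm
      _ ≤ volume (WSet n ω Ψ ∪ _) := measure_mono hcover
      _ ≤ volume (WSet n ω Ψ) + volume ({x : Fin n → ℝ |
            ¬ ∃ᶠ j in atTop, ∀ i, |x i - ω j i| < Ψ i j} ∩ cube n) := measure_union_le _ _
      _ = volume (WSet n ω Ψ) := by rw [hnull, add_zero]
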